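/- Let w₀, w₁ ∈ GL(2,ℝ) be matrices of the form [[a,b],[c,d]] with 1 ≤ a ≤ min(b,c) ≤ max(b,c) ≤ d. Let (sₖ) be a sequence of positive integers (s₁ = 1) and define w_{i+1} = wᵢ^{s_{i+1}} w_{i-1}. Then for all k ≥ 1 and 1 ≤ l ≤ s_{k+1}+1, ‖wₖ‖·‖wₖ^{l-1} w_{k-1}‖ ≤ ‖wₖ^l w_{k-1}‖ ≤ 2‖wₖ‖·‖wₖ^{l-1} w_{k-1}‖, where ‖·‖ is the maximum of the absolute values of the entries. -/
import Mathlib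


open Matrix

/-- The norm of a 2×2 real matrix: the maximum of the absolute values of its entries. -/
def matNorm (w : Matrix (Fin 2) (Fin 2) ℝ) : ℝ :=
  max (max |w 0 0| |w 0 1|) (max |w 1 0| |w 1 1|)

/-- The structural property preserved under products. -/
def GoodMat (u : Matrix (Fin 2) (Fin 2) ℝ) : Prop :=
  1 ≤ u 0 0 ∧ u 0 0 ≤ u 0 1 ∧ u 0 0 ≤ u 1 0 ∧ u 0 1 ≤ u 1 1 ∧ u 1 0 ≤ u 1 1

lemma goodMat_mul {u v : Matrix (Fin 2) (Fin 2) ℝ} (hu : GoodMat u) (hv : GoodMat v) :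
    GoodMat (u * v) := by
  obtain ⟨a1, a2, a3, a4, a5⟩ := hu
  obtain ⟨b1, b2, b3, b4, b5⟩ := hv
  refine ⟨?_, ?_, ?_, ?_, ?_⟩ <;>
    simp only [Matrix.mul_apply, Fin.sum_univ_two] <;> nlinarith

lemma goodMat_pow {u : Matrix (Fin 2) (Fin 2) ℝ} (hu : GoodMat u) :
    ∀ n, 1 ≤ n → GoodMat (u ^ n) := by
  intro n hn
  induction n with
  | zero => omega
  | succ m ih =>
    rcases Nat.eq_zero_or_pos m with rfl | hm
    · simpa using hu
    · rw [pow_succ]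
      exact goodMat_mul (ih hm) hu

lemma matNorm_good {u : Matrix (Fin 2) (Fin 2) ℝ} (hu : GoodMat u) :
    matNorm u = u 1 1 := by
  obtain ⟨a1, a2, a3, a4, a5⟩ := hu
  rw [matNorm, abs_of_nonneg (by linarith), abs_of_nonneg (by linarith),
    abs_of_nonneg (by linarith), abs_of_nonneg (by linarith),
    max_eq_right a5, max_eq_right (max_le (by linarith) a4)]

theorem stmt4 (s : ℕ → ℕ) (hs : ∀ k, 1 ≤ k → 0 < s k) (hs1 : s 1 = 1)
    (w : ℕ → Matrix (Fin 2) (Fin 2) ℝ)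
    (hdet0 : (w 0).det ≠ 0) (hdet1 : (w 1).det ≠ 0)
    (h0a : 1 ≤ w 0 0 0) (h0b : w 0 0 0 ≤ min (w 0 0 1) (w 0 1 0))
    (h0c : max (w 0 0 1) (w 0 1 0) ≤ w 0 1 1)
    (h1a : 1 ≤ w 1 0 0) (h1b : w 1 0 0 ≤ min (w 1 0 1) (w 1 1 0))
    (h1c : max (w 1 0 1) (w 1 1 0) ≤ w 1 1 1)
    (hrec : ∀ i, 1 ≤ i → w (i + 1) = w i ^ s (i + 1) * w (i - 1)) :
    ∀ k, 1 ≤ k → ∀ l, 1 ≤ l → l ≤ s (k + 1) + 1 →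
      matNorm (w k) * matNorm (w k ^ (l - 1) * w (k - 1)) ≤ matNorm (w k ^ l * w (k - 1)) ∧
      matNorm (w k ^ l * w (k - 1)) ≤ 2 * (matNorm (w k) * matNorm (w k ^ (l - 1) * w (k - 1))) := by
  have hg0 : GoodMat (w 0) := ⟨h0a, le_trans h0b (min_le_left _ _),
    le_trans h0b (min_le_right _ _), le_trans (le_max_left _ _) h0c,
    le_trans (le_max_right _ _) h0c⟩
  have hg1 : GoodMat (w 1) := ⟨h1a, le_trans h1b (min_le_left _ _),
    le_trans h1b (min_le_right _ _), le_trans (le_max_left _ _) h1c,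
    le_trans (le_max_right _ _) h1c⟩
  have hg : ∀ k, GoodMat (w k) ∧ GoodMat (w (k + 1)) := by
    intro k
    induction k with
    | zero => exact ⟨hg0, hg1⟩
    | succ m ih =>
      refine ⟨ih.2, ?_⟩
      rw [hrec (m + 1) (by omega)]
      simp only [Nat.add_sub_cancel]
      exact goodMat_mul (goodMat_pow ih.2 _ (hs (m + 2) (by omega))) ih.1
  intro k hk l hl _
  obtain ⟨m, rfl⟩ : ∃ m, l = m + 1 := ⟨l - 1, (Nat.succ_pred_eq_of_pos hl).symm⟩
  simp only [Nat.add_sub_cancel]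
  set v : Matrix (Fin 2) (Fin 2) ℝ := w k ^ m * w (k - 1) with hv
  have hgk := (hg k).1
  have hgk1 := (hg (k - 1)).1
  have hgv : GoodMat v := by
    rcases Nat.eq_zero_or_pos m with h | h
    · simpa [hv, h] using hgk1
    · exact goodMat_mul (goodMat_pow hgk _ h) hgk1
  have heq : w k ^ (m + 1) * w (k - 1) = w k * v := by
    rw [hv, pow_succ', mul_assoc]
  rw [heq, matNorm_good hgk, matNorm_good hgv, matNorm_good (goodMat_mul hgk hgv)]
  obtain ⟨a1, a2, a3, a4, a5⟩ := hgk
  obtain ⟨b1, b2, b3, b4, b5⟩ := hgv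
  constructor <;> simp only [Matrix.mul_apply, Fin.sum_univ_two] <;> nlinarith
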